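/- Let A and Z be 0-1 matrices of dimensions m × τ' (rows indexed 1..m, columns 1..τ'). Suppose the entries of Z are i.i.d. Bernoulli random variables with success probability λ, and λ ≤ 2/τ where τ = 2τ'. Define the operator I on 0-1 matrices by: I(X)_{i,j} = 1 iff X_{i,j} = 1 and X_{i,ℓ} = 0 for all ℓ < j (i.e., the first 1 in each row). Let w(X) denote the number of 1-entries of X, and let A∧Z denote entrywise conjunction. Then E[w(I(A∧Z))] ≥ (λ/2)·w(A). -/

import Mathlib

open MeasureTheory

/-- The operator `I` on 0-1 matrices keeping only the first `1` of each row. -/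
def matI {m nc : ℕ} (X : Fin m → Fin nc → Bool) : Fin m → Fin nc → Bool :=
  fun i j => X i j && decide (∀ l : Fin nc, l < j → X i l = false)

/-- The number of `1`-entries of a 0-1 matrix. -/
def matW {m nc : ℕ} (X : Fin m → Fin nc → Bool) : ℕ :=
  (Finset.univ.filter (fun p : Fin m × Fin nc => X p.1 p.2 = true)).card

/-- Key real inequality: `1 - (1-q)^w ≥ q w / 2` when `0 ≤ q ≤ 1` and `q w ≤ 1`. -/
lemma key_ineq (q : ℝ) (hq0 : 0 ≤ q) (hq1 : q ≤ 1) (w : ℕ) (hw : q * w ≤ 1) :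
    q / 2 * w ≤ 1 - (1 - q) ^ w := by
  have h1 : (0:ℝ) ≤ 1 - q := by linarith
  have hr0 : (0:ℝ) ≤ (1 - q) ^ w := pow_nonneg h1 w
  have hw0 : (0:ℝ) ≤ (w : ℝ) := Nat.cast_nonneg w
  have hb : (1 : ℝ) + w * q ≤ (1 + q) ^ w := one_add_mul_le_pow (by linarith) w
  have hsq : ((1 - q) * (1 + q)) ^ w ≤ 1 := by
    apply pow_le_one₀
    · nlinarith
    · nlinarith
  have hmul : (1 - q) ^ w * (1 + q * (w:ℝ)) ≤ 1 := by
    calc (1 - q) ^ w * (1 + q * (w:ℝ)) ≤ (1 - q) ^ w * (1 + q) ^ w := by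
          apply mul_le_mul_of_nonneg_left _ hr0
          calc (1:ℝ) + q * w = 1 + w * q := by ring
          _ ≤ (1 + q) ^ w := hb
      _ = ((1 - q) * (1 + q)) ^ w := (mul_pow _ _ _).symm
      _ ≤ 1 := hsq
  have ht0 : 0 ≤ q * (w:ℝ) := mul_nonneg hq0 hw0
  have ht2 : q * (w:ℝ) * (q * (w:ℝ)) ≤ q * (w:ℝ) := by nlinarith
  nlinarith [hmul, ht2, ht0]

/-- The number of ones in a row of `matI X` is `1` if the row of `X` is nonzero, else `0`. -/
lemma rowcard {nc : ℕ} (x : Fin nc → Bool) :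
    (Finset.univ.filter
        (fun j : Fin nc => (x j && decide (∀ l : Fin nc, l < j → x l = false)) = true)).card
      = if ∃ j, x j = true then 1 else 0 := by
  split
  case isTrue h =>
    classical
    set S := Finset.univ.filter (fun j : Fin nc => x j = true) with hS
    have hne : S.Nonempty := by
      obtain ⟨j, hj⟩ := h
      exact ⟨j, by simp [hS, hj]⟩
    set j0 := S.min' hne with hj0
    have hj0S : j0 ∈ S := S.min'_mem hne
    have hxj0 : x j0 = true := by simpa [hS] using hj0S
    have heq : (Finset.univ.filter
        (fun j : Fin nc => (x j && decide (∀ l : Fin nc, l < j → x l = false)) = true)) = {j0} := by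
      ext k
      simp only [Finset.mem_filter, Finset.mem_univ, true_and, Finset.mem_singleton,
        Bool.and_eq_true, decide_eq_true_eq]
      constructor
      · rintro ⟨hk, hmin⟩
        have h1 : j0 ≤ k := S.min'_le k (by simp [hS, hk])
        rcases lt_or_eq_of_le h1 with h2 | h2
        · exact absurd hxj0 (by simp [hmin j0 h2])
        · exact h2.symm
      · rintro rfl
        refine ⟨hxj0, fun l hl => ?_⟩
        by_contra hcon
        have : x l = true := by simpa using hcon
        have : j0 ≤ l := S.min'_le l (by simp [hS, this])
        exact absurd hl (not_lt.mpr this)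
    rw [heq]; simp
  case isFalse h =>
    push_neg at h
    rw [Finset.card_eq_zero]
    ext k
    simp only [Finset.mem_filter, Finset.mem_univ, true_and, Bool.and_eq_true,
      Finset.notMem_empty, iff_false, not_and]
    intro hk
    exact absurd hk (by simp [h k])

lemma matW_matI_eq {m nc : ℕ} (X : Fin m → Fin nc → Bool) :
    matW (matI X) = ∑ i : Fin m, if ∃ j, X i j = true then 1 else 0 := by
  classical
  rw [matW, Finset.card_filter, Fintype.sum_prod_type]
  congr 1
  funext i
  rw [← Finset.card_filter]
  exact rowcard (X i)

lemma matW_eq_sum {m nc : ℕ} (X : Fin m → Fin nc → Bool) :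
    matW X = ∑ i : Fin m, (Finset.univ.filter (fun j : Fin nc => X i j = true)).card := by
  classical
  rw [matW, Finset.card_filter, Fintype.sum_prod_type]
  congr 1
  funext i
  rw [← Finset.card_filter]

theorem stmt_1 (m τ' : ℕ) (A : Fin m → Fin τ' → Bool)
    (p : ENNReal) (hp : p ≤ 1) (hlam : p.toReal ≤ 2 / (2 * τ')) :
    (∫ Z : Fin m → Fin τ' → Bool,
        (matW (matI (fun i j => A i j && Z i j)) : ℝ)
        ∂(Measure.pi fun _ : Fin m =>
            Measure.pi fun _ : Fin τ' => (PMF.bernoulli p.toNNReal (by simpa using ENNReal.toNNReal_mono ENNReal.one_ne_top hp)).toMeasure))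
      ≥ p.toReal / 2 * matW A := by
  classical
  set ν : Measure (Fin τ' → Bool) :=
    Measure.pi fun _ : Fin τ' => (PMF.bernoulli p.toNNReal (by simpa using ENNReal.toNNReal_mono ENNReal.one_ne_top hp)).toMeasure with hν
  set μ : Measure (Fin m → Fin τ' → Bool) := Measure.pi fun _ : Fin m => ν with hμ
  have hpne : p ≠ ⊤ := ne_top_of_le_ne_top (by norm_num) hp
  set q : ℝ := p.toReal with hqdef
  have hq0 : 0 ≤ q := ENNReal.toReal_nonneg
  have hq1 : q ≤ 1 := by
    rw [hqdef, ← ENNReal.toReal_one]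
    exact ENNReal.toReal_mono (by norm_num) hp
  -- weight of row i of A
  set w : Fin m → ℕ := fun i => (Finset.univ.filter (fun j : Fin τ' => A i j = true)).card with hw
  have hwle : ∀ i, w i ≤ τ' := fun i => by
    simpa using Finset.card_filter_le Finset.univ (fun j : Fin τ' => A i j = true)
  have hqw : ∀ i, q * (w i : ℝ) ≤ 1 := by
    intro i
    rcases Nat.eq_zero_or_pos τ' with h0 | h0
    · have hwi : w i = 0 := by have := hwle i; omega
      rw [hwi]; norm_num
    · have hτ : (0:ℝ) < τ' := by exact_mod_cast h0
      have hq' : q ≤ 1 / τ' := by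
        have h2 : (2:ℝ) / (2 * (τ':ℝ)) = 1 / (τ':ℝ) := by
          rw [div_eq_div_iff (by positivity) (by positivity)]
          ring
        rw [← h2]
        exact hlam
      calc q * (w i : ℝ) ≤ (1 / τ') * τ' := by
            apply mul_le_mul hq' (by exact_mod_cast hwle i) (Nat.cast_nonneg _)
            positivity
        _ = 1 := by field_simp
  -- the per-row success event
  set S : Fin m → Set (Fin m → Fin τ' → Bool) :=
    fun i => {Z | ∃ j, A i j = true ∧ Z i j = true} with hSdef
  -- measure of the complement of the row event
  have hcompl : ∀ i, μ (S i)ᶜ = (1 - p) ^ (w i) := by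
    intro i
    have hsets : (S i)ᶜ = Set.pi Set.univ (fun i' : Fin m =>
        if i' = i then (Set.pi Set.univ (fun j : Fin τ' =>
          if A i j = true then ({false} : Set Bool) else Set.univ)) else Set.univ) := by
      ext Z
      simp only [Set.mem_compl_iff, hSdef, Set.mem_setOf_eq, not_exists, not_and,
        Set.mem_pi, Set.mem_univ, true_implies]
      constructor
      · intro h i'
        by_cases hi : i' = i
        · subst hi
          simp only [if_pos rfl, Set.mem_pi, Set.mem_univ, true_implies]
          intro j
          by_cases hA : A i' j = true
          · simp only [if_pos hA, Set.mem_singleton_iff]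
            have := h j hA
            simpa using this
          · simp [if_neg hA]
        · simp [if_neg hi]
      · intro h j hA
        have hi := h i
        simp only [if_pos rfl, Set.mem_pi, Set.mem_univ, true_implies] at hi
        have := hi j
        simp only [if_pos hA, Set.mem_singleton_iff] at this
        simp [this]
    rw [hsets, hμ, Measure.pi_pi]
    have hsplit : ∀ i' : Fin m, ν (if i' = i then (Set.pi Set.univ (fun j : Fin τ' =>
        if A i j = true then ({false} : Set Bool) else Set.univ)) else Set.univ)
        = if i' = i then ν (Set.pi Set.univ (fun j : Fin τ' =>
        if A i j = true then ({false} : Set Bool) else Set.univ)) else 1 := by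
      intro i'
      by_cases h : i' = i
      · rw [if_pos h, if_pos h]
      · rw [if_neg h, if_neg h, measure_univ]
    simp_rw [hsplit]
    rw [Finset.prod_ite_eq' Finset.univ i, if_pos (Finset.mem_univ i)]
    have hνC : ν (Set.pi Set.univ (fun j : Fin τ' =>
        if A i j = true then ({false} : Set Bool) else Set.univ)) = (1 - p) ^ (w i) := by
      rw [hν, Measure.pi_pi]
      have : ∀ j : Fin τ', (PMF.bernoulli p.toNNReal (by simpa using ENNReal.toNNReal_mono ENNReal.one_ne_top hp)).toMeasure
          (if A i j = true then ({false} : Set Bool) else Set.univ)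
          = if A i j = true then 1 - p else 1 := by
        intro j
        by_cases hA : A i j = true
        · rw [if_pos hA, if_pos hA,
            PMF.toMeasure_apply_singleton _ _ (measurableSet_singleton false)]
          refine (PMF.bernoulli_apply _ false).trans ?_
          simp [ENNReal.coe_sub, ENNReal.coe_toNNReal hpne]
        · rw [if_neg hA, if_neg hA, measure_univ]
      simp_rw [this]
      rw [← Finset.prod_filter, Finset.prod_const, hw]
    rw [hνC]
  -- measure of the row event itself, in real form
  have hmeas : ∀ i, (μ (S i)).toReal = 1 - (1 - q) ^ (w i) := by
    intro i
    have hSm : MeasurableSet ((S i)ᶜ) := (Set.to_countable _).measurableSet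
    have : μ ((S i)ᶜ)ᶜ = 1 - μ (S i)ᶜ := prob_compl_eq_one_sub hSm
    rw [compl_compl] at this
    rw [this, hcompl i]
    have hle1 : (1 - p) ≤ 1 := tsub_le_self
    have hle : (1 - p) ^ (w i) ≤ 1 := pow_le_one' hle1 _
    rw [ENNReal.toReal_sub_of_le hle (by norm_num), ENNReal.toReal_one, ENNReal.toReal_pow,
      ENNReal.toReal_sub_of_le hp (by norm_num), ENNReal.toReal_one]
  -- rewrite the integrand as a sum of indicators
  have hint : (∫ Z : Fin m → Fin τ' → Bool,
      (matW (matI (fun i j => A i j && Z i j)) : ℝ) ∂μ)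
      = ∑ i : Fin m, (μ (S i)).toReal := by
    have hfun : ∀ Z : Fin m → Fin τ' → Bool,
        (matW (matI (fun i j => A i j && Z i j)) : ℝ)
          = ∑ i : Fin m, (S i).indicator (fun _ => (1:ℝ)) Z := by
      intro Z
      rw [matW_matI_eq]
      push_cast
      congr 1
      funext i
      rw [Set.indicator_apply]
      by_cases h : Z ∈ S i
      · rw [if_pos h, if_pos]
        obtain ⟨j, h1, h2⟩ := h
        exact ⟨j, by simp [h1, h2]⟩
      · rw [if_neg h, if_neg]
        rintro ⟨j, hj⟩
        rw [Bool.and_eq_true] at hj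
        exact h ⟨j, hj⟩
    simp_rw [hfun]
    rw [integral_finset_sum]
    · congr 1
      funext i
      have hSm : MeasurableSet (S i) := (Set.to_countable _).measurableSet
      show _ = μ.real (S i); rw [← integral_indicator_one hSm]
      rfl
    · intro i _
      exact Integrable.of_finite
  rw [hint]
  have hfinal : ∑ i : Fin m, (μ (S i)).toReal ≥ ∑ i : Fin m, q / 2 * (w i : ℝ) := by
    apply Finset.sum_le_sum
    intro i _
    rw [hmeas i]
    exact key_ineq q hq0 hq1 (w i) (hqw i)
  refine le_trans ?_ hfinal
  rw [← Finset.mul_sum]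
  apply mul_le_mul_of_nonneg_left _ (by positivity)
  rw [matW_eq_sum]
  push_cast
  exact le_rfl
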